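/- Let k ≥ 1 and let H ∈ ℝ^{(k+1)×(k+1)} satisfy: every entry of H is 1 or −1; every entry of the first row of H equals 1; and the columns of H are pairwise orthogonal. Given ε > 0, let A ∈ ℝ^{(k+1)×(k+1)} be the matrix obtained from H by replacing every entry of the first row with ε. Then for every 1 < p < ∞, with q = p/(p−1), for every column index j ∈ {1,…,k+1} and every choice of real coefficients x_i (i ≠ j), ‖A_j − Σ_{i ≠ j} x_i A_i‖_p ≥ (k+1)·ε / (1 + k·ε^q)^{1/q}, where A_i denotes the i-th column of A and the norm is the vector ℓp norm on ℝ^{k+1}. -/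

import Mathlib

/-- The ℓp norm of a real vector. -/
noncomputable def vecLpNorm {n : ℕ} (p : ℝ) (v : Fin n → ℝ) : ℝ :=
  (∑ i, |v i| ^ p) ^ (1 / p)

theorem perturbed_hadamard_column_distance_lower_bound
    (k : ℕ) (hk : 1 ≤ k)
    (H : Matrix (Fin (k + 1)) (Fin (k + 1)) ℝ)
    (hpm : ∀ i j, H i j = 1 ∨ H i j = -1)
    (hrow : ∀ j, H 0 j = 1)
    (horth : ∀ i j, i ≠ j → ∑ d, H d i * H d j = 0)
    (ε : ℝ) (hε : 0 < ε)
    (A : Matrix (Fin (k + 1)) (Fin (k + 1)) ℝ)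
    (hA0 : ∀ j, A 0 j = ε)
    (hAi : ∀ i j, i ≠ 0 → A i j = H i j)
    (p : ℝ) (hp : 1 < p) (q : ℝ) (hq : q = p / (p - 1))
    (j : Fin (k + 1)) (x : Fin (k + 1) → ℝ) :
    ((k : ℝ) + 1) * ε / (1 + (k : ℝ) * ε ^ q) ^ (1 / q) ≤
      vecLpNorm p (fun d => A d j - ∑ i ∈ Finset.univ.erase j, x i * A d i) := by
  have hp1 : 0 < p - 1 := by linarith
  have hpq : p.HolderConjugate q := hq ▸ Real.HolderConjugate.conjExponent hp
  have hq1 : 1 < q := hpq.symm.lt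
  have hq0 : 0 < q := by linarith
  set v : Fin (k + 1) → ℝ :=
    fun d => A d j - ∑ i ∈ Finset.univ.erase j, x i * A d i with hv
  set u : Fin (k + 1) → ℝ := fun d => if d = 0 then 1 / ε else H d j with hu
  -- column pairing
  have col : ∀ c, (∑ d, u d * A d c) = 1 + ∑ t : Fin k, H t.succ j * H t.succ c := by
    intro c
    rw [Fin.sum_univ_succ]
    have h0 : u 0 * A 0 c = 1 := by
      simp [hu, hA0 c, div_mul_cancel₀, hε.ne']
    rw [h0]
    congr 1
    refine Finset.sum_congr rfl fun t _ => ?_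
    simp [hu, Fin.succ_ne_zero t, hAi _ c (Fin.succ_ne_zero t)]
  have colj : (∑ d, u d * A d j) = (k : ℝ) + 1 := by
    rw [col j]
    have : ∀ t : Fin k, H t.succ j * H t.succ j = 1 := fun t => by
      rcases hpm t.succ j with h | h <;> rw [h] <;> ring
    rw [Finset.sum_congr rfl fun t _ => this t]
    simp [add_comm]
  have coli : ∀ c ∈ Finset.univ.erase j, (∑ d, u d * A d c) = 0 := by
    intro c hc
    have hcj : c ≠ j := Finset.ne_of_mem_erase hc
    have h2 := horth j c hcj.symm
    rw [Fin.sum_univ_succ, hrow j, hrow c] at h2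
    rw [col c]
    linarith
  have key : (∑ d, u d * v d) = (k : ℝ) + 1 := by
    have : (∑ d, u d * v d)
        = (∑ d, u d * A d j)
          - ∑ i ∈ Finset.univ.erase j, x i * ∑ d, u d * A d i := by
      simp only [hv, mul_sub, Finset.sum_sub_distrib, Finset.mul_sum]
      congr 1
      rw [Finset.sum_comm]
      exact Finset.sum_congr rfl fun i _ =>
        Finset.sum_congr rfl fun d _ => by ring
    rw [this, colj, Finset.sum_congr rfl fun i hi => by rw [coli i hi]]
    simp
  -- norm of u
  have uq : (∑ d, |u d| ^ q) = (1 / ε) ^ q + (k : ℝ) := by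
    rw [Fin.sum_univ_succ]
    have h0 : |u 0| ^ q = (1 / ε) ^ q := by
      rw [show u 0 = 1 / ε from by simp [hu], abs_of_pos (by positivity)]
    have ht : ∀ t : Fin k, |u t.succ| ^ q = 1 := fun t => by
      have : |u t.succ| = 1 := by
        simp only [hu, if_neg (Fin.succ_ne_zero t)]
        rcases hpm t.succ j with h | h <;> rw [h] <;> simp
      rw [this, Real.one_rpow]
    rw [h0, Finset.sum_congr rfl fun t _ => ht t]
    simp
  have hεq : (0:ℝ) < ε ^ q := Real.rpow_pos_of_pos hε q
  have hD : (0:ℝ) < (1 + (k : ℝ) * ε ^ q) ^ (1 / q) := by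
    apply Real.rpow_pos_of_pos; positivity
  have uqval : (1 / ε) ^ q + (k : ℝ) = (1 + (k : ℝ) * ε ^ q) / ε ^ q := by
    rw [Real.div_rpow zero_le_one hε.le, Real.one_rpow]
    field_simp
  have uN : (∑ d, |u d| ^ q) ^ (1 / q) = (1 + (k : ℝ) * ε ^ q) ^ (1 / q) / ε := by
    rw [uq, uqval, Real.div_rpow (by positivity) hεq.le]
    congr 1
    rw [← Real.rpow_mul hε.le, mul_one_div_cancel hq0.ne', Real.rpow_one]
  -- Hölder
  have holder := Real.inner_le_Lp_mul_Lq Finset.univ v u hpq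
  have hvu : (∑ d, v d * u d) = (k : ℝ) + 1 := by
    rw [← key]; exact Finset.sum_congr rfl fun d _ => mul_comm _ _
  rw [hvu, uN] at holder
  have hNp : vecLpNorm p v = (∑ d, |v d| ^ p) ^ (1 / p) := rfl
  rw [hNp, div_le_iff₀ hD]
  have hNp0 : 0 ≤ (∑ d, |v d| ^ p) ^ (1 / p) := by positivity
  calc ((k : ℝ) + 1) * ε
      ≤ ((∑ d, |v d| ^ p) ^ (1 / p) * ((1 + (k : ℝ) * ε ^ q) ^ (1 / q) / ε)) * ε := by
        exact mul_le_mul_of_nonneg_right holder hε.le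
    _ = (∑ d, |v d| ^ p) ^ (1 / p) * (1 + (k : ℝ) * ε ^ q) ^ (1 / q) := by
        field_simp
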